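/- Let F be a pricing function with marginal-rate function G, let f>0 be the unit trading fee, and let a,b,y^A,y^B > 0. If 1/(1+f) ≤ G(y^A/y^B)/(a/b) ≤ 1+f, then (D^A,D^B) = (0,0) is the unique optimal solution of the investor's problem: for every feasible (D^A,D^B) ≠ (0,0), the objective value a(1+f·1_{D^A<0})D^A + b(1+f·1_{D^B<0})D^B is strictly less than 0, which is the objective value at (0,0). -/

import Mathlib

open Set Filter Topology

/-- A pricing function `F` with partial derivatives `Fx`, `Fy` and marginal-rate
function `G` (with derivative `G'`), as in Assumption 1 (Pricing Formula):
(i) `F` is continuously differentiable with positive partial derivatives;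
(ii) `Fx/Fy = G(x/y)` where `G` is continuously differentiable, strictly
decreasing (negative derivative), with `G → ∞` at `0⁺` and `G → 0` at `∞`;
(iii) homogeneity of level sets. -/
structure PricingFunction (F Fx Fy : ℝ → ℝ → ℝ) (G G' : ℝ → ℝ) : Prop where
  partialX : ∀ x y : ℝ, 0 < x → 0 < y → HasDerivAt (fun t => F t y) (Fx x y) x
  partialY : ∀ x y : ℝ, 0 < x → 0 < y → HasDerivAt (fun t => F x t) (Fy x y) y
  contX : ContinuousOn (fun p : ℝ × ℝ => Fx p.1 p.2) (Ioi 0 ×ˢ Ioi 0)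
  contY : ContinuousOn (fun p : ℝ × ℝ => Fy p.1 p.2) (Ioi 0 ×ˢ Ioi 0)
  posX : ∀ x y : ℝ, 0 < x → 0 < y → 0 < Fx x y
  posY : ∀ x y : ℝ, 0 < x → 0 < y → 0 < Fy x y
  ratio : ∀ x y : ℝ, 0 < x → 0 < y → Fx x y / Fy x y = G (x / y)
  derivG : ∀ z : ℝ, 0 < z → HasDerivAt G (G' z) z
  contG' : ContinuousOn G' (Ioi 0)
  negG' : ∀ z : ℝ, 0 < z → G' z < 0
  tendstoG0 : Tendsto G (𝓝[>] (0:ℝ)) atTop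
  tendstoGtop : Tendsto G atTop (𝓝 0)
  homog : ∀ x y x' y' c : ℝ, 0 < x → 0 < y → 0 < x' → 0 < y' → 0 < c →
    F x y = F x' y' → F (c * x) (c * y) = F (c * x') (c * y')

lemma pf_chain {F Fx Fy : ℝ → ℝ → ℝ} {G G' : ℝ → ℝ}
    (hF : PricingFunction F Fx Fy G G') {c g x : ℝ} (hg : 0 < g)
    (hx : 0 < x) (hl : 0 < c - g * x) :
    HasDerivAt (fun t => F t (c - g * t))
      (Fx x (c - g * x) - g * Fy x (c - g * x)) x := by
  set lx := c - g * x with hlx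
  -- the auxiliary function
  have key : HasDerivAt (fun t => F t (c - g * t) - F t lx) (-(g * Fy x lx)) x := by
    rw [hasDerivAt_iff_tendsto_slope]
    set δ : ℝ := min (x / 2) (lx / (2 * g)) with hδ
    have hδpos : 0 < δ := lt_min (by linarith) (by positivity)
    -- choice function for the MVT point
    classical
    set η : ℝ → ℝ := fun t =>
      if h : ∃ e, |e - lx| ≤ g * |t - x| ∧ 0 < e ∧
          Fy t e * ((c - g * t) - lx) = F t (c - g * t) - F t lx
      then h.choose else lx with hη
    have hηbound : ∀ t, |η t - lx| ≤ g * |t - x| := by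
      intro t
      by_cases h : ∃ e, |e - lx| ≤ g * |t - x| ∧ 0 < e ∧
          Fy t e * ((c - g * t) - lx) = F t (c - g * t) - F t lx
      · simp only [hη, dif_pos h]; exact h.choose_spec.1
      · simp only [hη, dif_neg h]; simp; positivity
    have hgoodt : ∀ t : ℝ, |t - x| < δ → 0 < t ∧ lx / 2 < c - g * t := by
      intro t ht
      have h1 : |t - x| < x / 2 := lt_of_lt_of_le ht (min_le_left _ _)
      have h2 : |t - x| < lx / (2 * g) := lt_of_lt_of_le ht (min_le_right _ _)
      rw [abs_lt] at h1 h2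
      constructor
      · linarith [h1.1]
      · have : g * (t - x) < g * (lx / (2 * g)) := by
          apply mul_lt_mul_of_pos_left _ hg
          exact lt_of_le_of_lt (le_abs_self _) (lt_of_lt_of_le ht (min_le_right _ _))
        have hgg : g * (lx / (2 * g)) = lx / 2 := by field_simp
        have : c - g * t = lx - g * (t - x) := by rw [hlx]; ring
        rw [this]; nlinarith [h2.2]
    have hev : ∀ᶠ t in 𝓝[≠] x, |t - x| < δ ∧ t ≠ x := by
      refine Filter.Eventually.and ?_ (eventually_mem_nhdsWithin.mono fun t ht => ht)
      refine eventually_nhdsWithin_of_eventually_nhds ?_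
      have : Metric.ball x δ ∈ 𝓝 x := Metric.ball_mem_nhds x hδpos
      filter_upwards [this] with t ht
      rwa [Metric.mem_ball, Real.dist_eq] at ht
    -- eventually the slope equals -(g * Fy t (η t))
    have hslope : ∀ᶠ t in 𝓝[≠] x, slope (fun t => F t (c - g * t) - F t lx) x t
        = -(g * Fy t (η t)) := by
      filter_upwards [hev] with t ⟨ht, htne⟩
      have hgt := hgoodt t ht
      have htpos : 0 < t := hgt.1
      have hltpos : 0 < c - g * t := by linarith [hgt.2, hl]
      have hex : ∃ e, |e - lx| ≤ g * |t - x| ∧ 0 < e ∧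
          Fy t e * ((c - g * t) - lx) = F t (c - g * t) - F t lx := by
        rcases lt_or_gt_of_ne htne with hlt | hgt'
        · -- t < x, so c - g*t > lx
          have hll : lx < c - g * t := by rw [hlx]; nlinarith
          obtain ⟨e, he, hee⟩ := exists_hasDerivAt_eq_slope (fun s => F t s) (Fy t) hll
            (fun s hs => ((hF.partialY t s htpos (lt_of_lt_of_le hl hs.1)).continuousAt).continuousWithinAt)
            (fun s hs => hF.partialY t s htpos (lt_trans hl hs.1))
          refine ⟨e, ?_, lt_trans hl he.1, ?_⟩
          · rw [abs_le]
            constructor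
            · have := he.1; linarith [abs_nonneg (t - x), mul_nonneg hg.le (abs_nonneg (t-x))]
            · have h2 : e < c - g * t := he.2
              have : c - g * t - lx = g * (x - t) := by rw [hlx]; ring
              have hxt : |t - x| = x - t := by rw [abs_of_neg (by linarith)]; ring
              rw [hxt]; nlinarith
          · rw [hee, div_mul_cancel₀ _ (by linarith : (c - g * t) - lx ≠ 0)]
        · -- t > x, so c - g*t < lx
          have hll : c - g * t < lx := by rw [hlx]; nlinarith
          obtain ⟨e, he, hee⟩ := exists_hasDerivAt_eq_slope (fun s => F t s) (Fy t) hll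
            (fun s hs => ((hF.partialY t s htpos (lt_of_lt_of_le hltpos hs.1)).continuousAt).continuousWithinAt)
            (fun s hs => hF.partialY t s htpos (lt_trans hltpos hs.1))
          refine ⟨e, ?_, lt_trans hltpos he.1, ?_⟩
          · rw [abs_le]
            have hxt : |t - x| = t - x := abs_of_pos (by linarith)
            constructor
            · have := he.1
              have : lx - (c - g * t) = g * (t - x) := by rw [hlx]; ring
              rw [hxt]; nlinarith [he.1]
            · have := he.2; rw [hxt]
              nlinarith [mul_pos hg (sub_pos.2 hgt')]
          · rw [hee]
            have hne : lx - (c - g * t) ≠ 0 := by linarith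
            field_simp
            ring
      have hspec := hex.choose_spec
      have hηt : η t = hex.choose := by simp only [hη, dif_pos hex]
      rw [slope_def_field]
      rw [div_eq_iff (sub_ne_zero.2 htne)]
      have heq : Fy t (η t) * ((c - g * t) - lx) = F t (c - g * t) - F t lx := by
        rw [hηt]; exact hspec.2.2
      have hclt : (c - g * t) - lx = -(g * (t - x)) := by rw [hlx]; ring
      have : F t (c - g * t) - F t lx = Fy t (η t) * (-(g * (t - x))) := by
        rw [← hclt, heq]
      simp only [hlx] at this ⊢
      rw [sub_self, sub_zero, this]
      ring
    -- η t tends to lx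
    have hηtendsto : Tendsto η (𝓝[≠] x) (𝓝 lx) := by
      rw [tendsto_iff_dist_tendsto_zero]
      have hb : Tendsto (fun t => g * |t - x|) (𝓝[≠] x) (𝓝 0) := by
        have : Tendsto (fun t : ℝ => g * |t - x|) (𝓝 x) (𝓝 (g * |x - x|)) := by
          exact (continuous_const.mul ((continuous_id.sub continuous_const).abs)).tendsto x
        simp at this
        exact this.mono_left nhdsWithin_le_nhds
      refine squeeze_zero (fun t => dist_nonneg) (fun t => ?_) hb
      rw [Real.dist_eq]; exact hηbound t
    have hcont : ContinuousAt (fun p : ℝ × ℝ => Fy p.1 p.2) (x, lx) := by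
      apply hF.contY.continuousAt
      exact IsOpen.mem_nhds (isOpen_Ioi.prod isOpen_Ioi) ⟨hx, hl⟩
    have htt : Tendsto (fun t => (t, η t)) (𝓝[≠] x) (𝓝 (x, lx)) :=
      (tendsto_id.mono_left nhdsWithin_le_nhds).prodMk_nhds hηtendsto
    have hFyt : Tendsto (fun t => Fy t (η t)) (𝓝[≠] x) (𝓝 (Fy x lx)) :=
      hcont.tendsto.comp htt
    have : Tendsto (fun t => -(g * Fy t (η t))) (𝓝[≠] x) (𝓝 (-(g * Fy x lx))) :=
      (hFyt.const_mul g).neg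
    exact Tendsto.congr' (hslope.mono fun t ht => ht.symm) this
  have hX : HasDerivAt (fun t => F t lx) (Fx x lx) x := hF.partialX x lx hx hl
  have := key.add hX
  simp only [Pi.add_def, sub_add_cancel] at this
  exact this.congr_deriv (by ring)
section Rest
variable {F Fx Fy : ℝ → ℝ → ℝ} {G G' : ℝ → ℝ}

lemma pf_Ganti (hF : PricingFunction F Fx Fy G G') : StrictAntiOn G (Ioi 0) :=
  strictAntiOn_of_deriv_neg (convex_Ioi 0)
    (fun z hz => (hF.derivG z hz).continuousAt.continuousWithinAt)
    (by
      rw [interior_Ioi]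
      intro z hz
      rw [(hF.derivG z hz).deriv]
      exact hF.negG' z hz)

lemma pf_Gpos (hF : PricingFunction F Fx Fy G G') {z : ℝ} (hz : 0 < z) : 0 < G z := by
  have := hF.ratio z 1 hz one_pos
  rw [div_one] at this
  rw [← this]
  exact div_pos (hF.posX z 1 hz one_pos) (hF.posY z 1 hz one_pos)

lemma pf_ymono (hF : PricingFunction F Fx Fy G G') {x : ℝ} (hx : 0 < x) :
    StrictMonoOn (fun s => F x s) (Ioi 0) :=
  strictMonoOn_of_deriv_pos (convex_Ioi 0)
    (fun s hs => (hF.partialY x s hx hs).continuousAt.continuousWithinAt)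
    (by
      rw [interior_Ioi]
      intro s hs
      rw [(hF.partialY x s hx hs).deriv]
      exact hF.posY x s hx hs)

/-- The tangent line at `(yA, yB)` lies strictly below the level curve. -/
lemma pf_tangent (hF : PricingFunction F Fx Fy G G') {yA yB x : ℝ}
    (hyA : 0 < yA) (hyB : 0 < yB) (hx : 0 < x) (hne : x ≠ yA)
    (hl : 0 < yB + G (yA / yB) * (yA - x)) :
    F x (yB + G (yA / yB) * (yA - x)) < F yA yB := by
  set g := G (yA / yB) with hg
  have hgpos : 0 < g := pf_Gpos hF (by positivity)
  set c : ℝ := yB + g * yA with hc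
  have hcl : ∀ t : ℝ, c - g * t = yB + g * (yA - t) := fun t => by rw [hc]; ring
  have hclyA : c - g * yA = yB := by rw [hc]; ring
  -- derivative of φ at points of the curve
  have hderiv : ∀ t : ℝ, 0 < t → 0 < c - g * t →
      deriv (fun t => F t (c - g * t)) t
        = Fy t (c - g * t) * (G (t / (c - g * t)) - g) := by
    intro t ht hlt
    rw [(pf_chain hF hgpos ht hlt).deriv]
    have hr := hF.ratio t (c - g * t) ht hlt
    rw [div_eq_iff (ne_of_gt (hF.posY t (c - g * t) ht hlt))] at hr
    rw [hr]; ring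
  rcases lt_or_gt_of_ne hne with hlt | hgt
  · -- x < yA : φ strictly increasing on [x, yA]
    have hpos : ∀ t ∈ Icc x yA, 0 < t ∧ 0 < c - g * t := by
      intro t htm
      refine ⟨lt_of_lt_of_le hx htm.1, ?_⟩
      rw [hcl]
      have : 0 ≤ g * (yA - t) := mul_nonneg hgpos.le (by linarith [htm.2])
      linarith
    have hmono : StrictMonoOn (fun t => F t (c - g * t)) (Icc x yA) := by
      apply strictMonoOn_of_deriv_pos (convex_Icc x yA)
      · intro t htm
        exact (pf_chain hF hgpos (hpos t htm).1 (hpos t htm).2).continuousAt.continuousWithinAt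
      · rw [interior_Icc]
        intro t htm
        have ht := hpos t ⟨htm.1.le, htm.2.le⟩
        rw [hderiv t ht.1 ht.2]
        have hGgt : g < G (t / (c - g * t)) := by
          rw [hg]
          apply pf_Ganti hF (mem_Ioi.2 (div_pos ht.1 ht.2))
            (mem_Ioi.2 (div_pos hyA hyB))
          rw [div_lt_div_iff₀ ht.2 hyB]
          have h1 : yB < c - g * t := by
            rw [hcl]; nlinarith [mul_pos hgpos (sub_pos.2 htm.2)]
          nlinarith [htm.2, h1, hyA]
        have := hF.posY t (c - g * t) ht.1 ht.2
        nlinarith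
    have := hmono ⟨le_refl x, hlt.le⟩ ⟨hlt.le, le_refl yA⟩ hlt
    simpa [hclyA, hcl] using this
  · -- x > yA : φ strictly decreasing on [yA, x]
    have hlx : 0 < c - g * x := by rw [hcl]; exact hl
    have hpos : ∀ t ∈ Icc yA x, 0 < t ∧ 0 < c - g * t := by
      intro t htm
      refine ⟨lt_of_lt_of_le hyA htm.1, ?_⟩
      have : g * t ≤ g * x := mul_le_mul_of_nonneg_left htm.2 hgpos.le
      linarith
    have hanti : StrictAntiOn (fun t => F t (c - g * t)) (Icc yA x) := by
      apply strictAntiOn_of_deriv_neg (convex_Icc yA x)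
      · intro t htm
        exact (pf_chain hF hgpos (hpos t htm).1 (hpos t htm).2).continuousAt.continuousWithinAt
      · rw [interior_Icc]
        intro t htm
        have ht := hpos t ⟨htm.1.le, htm.2.le⟩
        rw [hderiv t ht.1 ht.2]
        have hGlt : G (t / (c - g * t)) < g := by
          rw [hg]
          apply pf_Ganti hF (mem_Ioi.2 (div_pos hyA hyB))
            (mem_Ioi.2 (div_pos ht.1 ht.2))
          rw [div_lt_div_iff₀ hyB ht.2]
          have h1 : c - g * t < yB := by
            rw [hcl]; nlinarith [mul_pos hgpos (sub_pos.2 htm.1)]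
          nlinarith [htm.1, h1, hyA]
        have := hF.posY t (c - g * t) ht.1 ht.2
        nlinarith
    have := hanti ⟨le_refl yA, hgt.le⟩ ⟨hgt.le, le_refl x⟩ hgt
    simpa [hclyA, hcl] using this

end Rest

/-- The investor's post-fee profit `a(1+f·1_{Dᴬ<0})Dᴬ + b(1+f·1_{Dᴮ<0})Dᴮ`. -/
noncomputable def objective (f a b DA DB : ℝ) : ℝ :=
  a * (if DA < 0 then 1 + f else 1) * DA + b * (if DB < 0 then 1 + f else 1) * DB

/-- The no-trading region: if `1/(1+f) ≤ G(yᴬ/yᴮ)/(a/b) ≤ 1+f`, then `(0,0)` is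
the unique optimal solution of the investor's problem: every other feasible
trade has a strictly negative objective value. -/
theorem stmt5 (F Fx Fy : ℝ → ℝ → ℝ) (G G' : ℝ → ℝ)
    (hF : PricingFunction F Fx Fy G G')
    (f : ℝ) (hf : 0 < f) (a b yA yB : ℝ)
    (ha : 0 < a) (hb : 0 < b) (hyA : 0 < yA) (hyB : 0 < yB)
    (hreg₁ : 1 / (1 + f) ≤ G (yA / yB) / (a / b))
    (hreg₂ : G (yA / yB) / (a / b) ≤ 1 + f) :
    ∀ DA DB : ℝ, F (yA - DA) (yB - DB) = F yA yB →
      0 < yA - DA → 0 < yB - DB → (DA, DB) ≠ (0, 0) →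
      objective f a b DA DB < 0 := by
  intro DA DB hfeas hxpos hypos hne
  set g := G (yA / yB) with hg
  have hgpos : 0 < g := pf_Gpos hF (by positivity)
  have h1f : (0:ℝ) < 1 + f := by linarith
  have hab : (0:ℝ) < a / b := by positivity
  -- regularity bounds
  have hbd₁ : a ≤ b * ((1 + f) * g) := by
    rw [div_le_div_iff₀ h1f hab] at hreg₁
    have h2 := mul_le_mul_of_nonneg_left hreg₁ hb.le
    have h3 : b * (1 * (a / b)) = a := by field_simp
    nlinarith [h2, h3]
  have hbd₂ : b * g ≤ a * (1 + f) := by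
    rw [div_le_iff₀ hab] at hreg₂
    have h2 := mul_le_mul_of_nonneg_left hreg₂ hb.le
    have h3 : b * ((1 + f) * (a / b)) = a * (1 + f) := by field_simp
    nlinarith [h2, h3]
  by_cases hDA : DA = 0
  · -- then DB = 0, contradiction
    subst hDA
    simp only [sub_zero] at hfeas
    have := (pf_ymono hF hyA).injOn hypos (mem_Ioi.2 hyB) hfeas
    exfalso
    apply hne
    simp [this]
    linarith
  · -- DA ≠ 0 : key inequality DB < -(g * DA)
    have hxne : yA - DA ≠ yA := by intro h; apply hDA; linarith [sub_eq_iff_eq_add.mp h]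
    have key : DB < -(g * DA) := by
      by_cases hl : 0 < yB + g * (yA - (yA - DA))
      · have htan := pf_tangent hF hyA hyB hxpos hxne (hg ▸ hl)
        rw [← hfeas] at htan
        have hlval : yB + g * (yA - (yA - DA)) < yB - DB := by
          by_contra hcon
          push_neg at hcon
          have := (pf_ymono hF hxpos).monotoneOn (mem_Ioi.2 hypos) (mem_Ioi.2 hl) hcon
          rw [hg] at this
          exact absurd (lt_of_lt_of_le htan this) (lt_irrefl _)
        nlinarith
      · push_neg at hl
        nlinarith
    by_cases hDApos : 0 < DA
    · -- DA > 0, DB < 0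
      have hDBneg : DB < 0 := by nlinarith
      unfold objective
      rw [if_neg (by linarith), if_pos hDBneg]
      nlinarith
    · -- DA < 0
      have hDAneg : DA < 0 := lt_of_le_of_ne (not_lt.1 hDApos) hDA
      unfold objective
      rw [if_pos hDAneg]
      by_cases hDB : DB < 0
      · rw [if_pos hDB]
        nlinarith [mul_neg_of_pos_of_neg (mul_pos ha h1f) hDAneg,
          mul_neg_of_pos_of_neg (mul_pos hb h1f) hDB]
      · rw [if_neg hDB]
        push_neg at hDB
        nlinarith
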